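/- For n ≥ 2, two generalized numerical semigroups ⟨A⟩, ⟨B⟩ ⊆ ℕ^n cannot be glued: there is no gluing ⟨C⟩ = ⟨A⟩ ⋈ ⟨B⟩ in ℕ^n. -/

import Mathlib

/-- Coordinatewise embedding of `ℕⁿ` into `ℤⁿ`. -/
def natVecToZ {n : ℕ} (x : Fin n → ℕ) : Fin n → ℤ := fun i => (x i : ℤ)

/-- `⟨A ⊔ B⟩` is a gluing of `⟨A⟩` and `⟨B⟩`: there is a nonzero `d ∈ ⟨A⟩ ∩ ⟨B⟩` with
`G(A) ∩ G(B) = ℤd`, where `G(·)` denotes the group generated in `ℤⁿ`. -/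
def IsGluing {n : ℕ} (A B : Set (Fin n → ℕ)) : Prop :=
  Disjoint A B ∧ ∃ d : Fin n → ℕ, d ≠ 0 ∧
    d ∈ AddSubmonoid.closure A ∧ d ∈ AddSubmonoid.closure B ∧
    AddSubgroup.closure (natVecToZ '' A) ⊓ AddSubgroup.closure (natVecToZ '' B) =
      AddSubgroup.zmultiples (natVecToZ d)

/-- `natVecToZ` as an additive monoid hom. -/
def natVecToZHom (n : ℕ) : (Fin n → ℕ) →+ (Fin n → ℤ) :=
  AddMonoidHom.mk' natVecToZ (by
    intro x y; funext i; simp [natVecToZ])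

lemma mem_closure_image_natVecToZ {n : ℕ} {A : Set (Fin n → ℕ)} {x : Fin n → ℕ}
    (hx : x ∈ AddSubmonoid.closure A) :
    natVecToZ x ∈ AddSubgroup.closure (natVecToZ '' A) := by
  induction hx using AddSubmonoid.closure_induction with
  | mem y hy => exact AddSubgroup.subset_closure ⟨y, hy, rfl⟩
  | zero =>
      have : natVecToZ (0 : Fin n → ℕ) = 0 := by funext i; simp [natVecToZ]
      rw [this]; exact zero_mem _
  | add x y _ _ hx hy =>
      have : natVecToZ (x + y) = natVecToZ x + natVecToZ y := by
        funext i; simp [natVecToZ]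
      rw [this]; exact add_mem hx hy

lemma single_mem_group {n : ℕ} {A : Set (Fin n → ℕ)}
    (hA : ((AddSubmonoid.closure A : Set (Fin n → ℕ)))ᶜ.Finite) (i : Fin n) :
    natVecToZ (Pi.single i 1) ∈ AddSubgroup.closure (natVecToZ '' A) := by
  set e : Fin n → ℕ := Pi.single i 1 with he
  have hinj : Set.InjOn (fun m : ℕ => m • e)
      ((fun m : ℕ => m • e) ⁻¹' ((AddSubmonoid.closure A : Set (Fin n → ℕ)))ᶜ) := by
    intro a _ b _ hab
    have := congrFun hab i
    simpa [he, Pi.single_apply] using this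
  have hT : ((fun m : ℕ => m • e) ⁻¹' ((AddSubmonoid.closure A : Set (Fin n → ℕ)))ᶜ).Finite :=
    hA.preimage hinj
  obtain ⟨M, hM⟩ := hT.bddAbove
  have hmem : ∀ m : ℕ, M < m → m • e ∈ AddSubmonoid.closure A := by
    intro m hm
    by_contra h
    exact absurd (hM h) (by omega)
  have h1 := mem_closure_image_natVecToZ (A := A) (hmem (M + 1) (by omega))
  have h2 := mem_closure_image_natVecToZ (A := A) (hmem (M + 2) (by omega))
  have key : natVecToZ e = natVecToZ ((M + 2) • e) - natVecToZ ((M + 1) • e) := by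
    funext j
    simp [natVecToZ]
    ring
  rw [key]
  exact sub_mem h2 h1

lemma smul_mem_closure_image {n : ℕ} (k : ℕ) {S : Set (Fin n → ℤ)} {z : Fin n → ℤ}
    (hz : z ∈ AddSubgroup.closure S) :
    k • z ∈ AddSubgroup.closure ((fun w => k • w) '' S) := by
  induction hz using AddSubgroup.closure_induction with
  | mem y hy => exact AddSubgroup.subset_closure ⟨y, hy, rfl⟩
  | zero => rw [smul_zero]; exact zero_mem _
  | add x y _ _ hx hy => rw [smul_add]; exact add_mem hx hy
  | neg x _ hx => rw [smul_neg]; exact neg_mem hx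

theorem no_gluing_of_gns {n : ℕ} (hn : 2 ≤ n) (A B : Set (Fin n → ℕ))
    (hA : ((AddSubmonoid.closure A : Set (Fin n → ℕ)))ᶜ.Finite)
    (hB : ((AddSubmonoid.closure B : Set (Fin n → ℕ)))ᶜ.Finite) :
    ∀ k1 k2 : ℕ, 0 < k1 → 0 < k2 →
      ¬ IsGluing ((fun v => k1 • v) '' A) ((fun v => k2 • v) '' B) := by
  intro k1 k2 hk1 hk2 hglue
  obtain ⟨-, d, hd0, -, -, hinter⟩ := hglue
  have himA : natVecToZ '' ((fun v => k1 • v) '' A) = (fun w => k1 • w) '' (natVecToZ '' A) := by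
    rw [Set.image_image, Set.image_image]
    apply Set.image_congr'
    intro v
    funext j
    simp [natVecToZ]
  have himB : natVecToZ '' ((fun v => k2 • v) '' B) = (fun w => k2 • w) '' (natVecToZ '' B) := by
    rw [Set.image_image, Set.image_image]
    apply Set.image_congr'
    intro v
    funext j
    simp [natVecToZ]
  set i0 : Fin n := ⟨0, by omega⟩
  set i1 : Fin n := ⟨1, by omega⟩
  have hne : i1 ≠ i0 := by simp [i0, i1, Fin.ext_iff]
  have key : ∀ i : Fin n, ∃ a : ℤ, a • natVecToZ d = (k1 * k2 : ℕ) • natVecToZ (Pi.single i 1) := by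
    intro i
    have hAi := single_mem_group hA i
    have hBi := single_mem_group hB i
    have h1 : (k1 * k2 : ℕ) • natVecToZ (Pi.single i 1) ∈
        AddSubgroup.closure (natVecToZ '' ((fun v => k1 • v) '' A)) := by
      rw [himA, mul_comm, mul_smul]
      exact AddSubgroup.nsmul_mem _ (smul_mem_closure_image k1 hAi) k2
    have h2 : (k1 * k2 : ℕ) • natVecToZ (Pi.single i 1) ∈
        AddSubgroup.closure (natVecToZ '' ((fun v => k2 • v) '' B)) := by
      rw [himB, mul_smul]
      exact AddSubgroup.nsmul_mem _ (smul_mem_closure_image k2 hBi) k1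
    have : (k1 * k2 : ℕ) • natVecToZ (Pi.single i 1) ∈
        AddSubgroup.zmultiples (natVecToZ d) := by
      rw [← hinter]; exact ⟨h1, h2⟩
    exact this
  obtain ⟨a, ha⟩ := key i0
  obtain ⟨b, hb⟩ := key i1
  have ha0 := congrFun ha i0
  have ha1 := congrFun ha i1
  have hb1 := congrFun hb i1
  simp [natVecToZ, Pi.single_apply, hne, smul_eq_mul] at ha0 ha1 hb1
  have hK : (k1 : ℤ) * k2 ≠ 0 := by positivity
  have hane : a ≠ 0 := by
    intro h; rw [h, zero_mul] at ha0; exact hK ha0.symm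
  rcases ha1 with h | h
  · exact hane h
  · rw [h] at hb1
    push_cast at hb1
    rw [mul_zero] at hb1
    exact hK hb1.symm
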